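/- Let p be a prime, r ≥ 1, and let φ be a finite-dimensional complex representation of SL₄(ℤ/p^rℤ) on a nonzero space which is new, i.e. the kernel of the reduction homomorphism SL₄(ℤ/p^rℤ) → SL₄(ℤ/p^{r-1}ℤ) is not contained in the kernel of φ. If φ is irreducible, then for every pair 1 ≤ i ≠ j ≤ 4, φ(I + p^{r-1}E_{ij}) is not the identity. -/

import Mathlib

open Matrix

/-- The elementary matrix `I + p^(r-1) E i j` as an element of `SL₄(ℤ/p^r)`, for `i ≠ j`. -/
def elem (p r : ℕ) (i j : Fin 4) (h : i ≠ j) :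
    Matrix.SpecialLinearGroup (Fin 4) (ZMod (p ^ r)) :=
  ⟨1 + Matrix.single i j ((p : ZMod (p ^ r)) ^ (r - 1)), by
    simpa [Matrix.transvection] using
      Matrix.det_transvection_of_ne i j h ((p : ZMod (p ^ r)) ^ (r - 1))⟩

section Aux

variable {R : Type*} [CommRing R]

/-- elementary SL₄ element -/
def Xe (t : R) (i j : Fin 4) (h : i ≠ j) : Matrix.SpecialLinearGroup (Fin 4) R :=
  ⟨Matrix.transvection i j t, Matrix.det_transvection_of_ne i j h t⟩

lemma Xe_mul (t s : R) (i j : Fin 4) (h : i ≠ j) :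
    Xe t i j h * Xe s i j h = Xe (t + s) i j h :=
  Subtype.ext (Matrix.transvection_mul_transvection_same (i := i) (j := j) h t s)

lemma Xe_zero (i j : Fin 4) (h : i ≠ j) : Xe (0 : R) i j h = 1 :=
  Subtype.ext (Matrix.transvection_zero i j)

lemma Xe_inv (t : R) (i j : Fin 4) (h : i ≠ j) : (Xe t i j h)⁻¹ = Xe (-t) i j h := by
  apply inv_eq_of_mul_eq_one_right
  rw [Xe_mul, add_neg_cancel, Xe_zero]

lemma Xe_comm (t s : R) (i j k : Fin 4) (hij : i ≠ j) (hjk : j ≠ k) (hik : i ≠ k) :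
    Xe t i j hij * Xe s j k hjk * Xe (-t) i j hij * Xe (-s) j k hjk = Xe (t * s) i k hik := by
  apply Subtype.ext
  show (transvection i j t * transvection j k s * transvection i j (-t) * transvection j k (-s)) =
    transvection i k (t * s)
  simp only [Matrix.transvection, Matrix.add_mul, Matrix.mul_add, Matrix.one_mul, Matrix.mul_one,
    Matrix.single_mul_single_same, Matrix.single_mul_single_of_ne, ne_eq,
    hij.symm, hjk.symm, hik.symm, not_false_eq_true, add_zero, zero_add, mul_zero, zero_mul,
    Matrix.zero_mul, Matrix.mul_zero, add_zero]
  ext a b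
  simp only [Matrix.add_apply, Matrix.one_apply, Matrix.single, Matrix.of_apply,
    Matrix.zero_apply]
  split_ifs <;> ring1

def Wg (u : Rˣ) (a b : Fin 4) (h : a ≠ b) : Matrix.SpecialLinearGroup (Fin 4) R :=
  Xe (u : R) a b h * Xe (-(↑u⁻¹ : R)) b a h.symm * Xe (u : R) a b h *
    Xe (-1) a b h * Xe 1 b a h.symm * Xe (-1) a b h

lemma Wg_val (u : Rˣ) (a b : Fin 4) (h : a ≠ b) :
    (Wg u a b h : Matrix (Fin 4) (Fin 4) R) =
      1 + Matrix.single a a ((u : R) - 1) + Matrix.single b b ((↑u⁻¹ : R) - 1) := by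
  show (transvection a b (u : R) * transvection b a (-(↑u⁻¹ : R)) * transvection a b (u : R) *
      transvection a b (-1) * transvection b a 1 * transvection a b (-1)) = _
  have huu : (u : R) * (↑u⁻¹ : R) = 1 := u.mul_inv
  have huu' : (↑u⁻¹ : R) * (u : R) = 1 := u.inv_mul
  simp only [Matrix.transvection, Matrix.add_mul, Matrix.mul_add, Matrix.one_mul, Matrix.mul_one,
    Matrix.single_mul_single_same, Matrix.single_mul_single_of_ne, ne_eq,
    h, h.symm, not_false_eq_true, add_zero, zero_add, mul_zero, zero_mul,
    Matrix.zero_mul, Matrix.mul_zero]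
  ext x y
  simp only [Matrix.add_apply, Matrix.one_apply, Matrix.single, Matrix.of_apply,
    Matrix.zero_apply]
  have h1 : (↑u : R) ^ 2 * (↑u⁻¹ : R) = ↑u := by rw [pow_two, mul_assoc, huu, mul_one]
  have h2 : (↑u⁻¹ : R) * (↑u : R) ^ 2 = ↑u := by rw [pow_two, ← mul_assoc, huu', one_mul]
  split_ifs <;> first
    | ring1
    | (ring_nf; simp only [huu, huu', h1, h2]; try ring1)

variable {G : Type*} [Group G] (φ : Matrix.SpecialLinearGroup (Fin 4) R →* G)

/-- φ kills all elementaries with parameter a multiple of q at position (a,b). -/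
def Pk (q : R) (a b : Fin 4) (hab : a ≠ b) : Prop :=
  ∀ c : R, φ (Xe (q * c) a b hab) = 1

lemma phi_Xe_neg {t : R} {i j : Fin 4} {h : i ≠ j} (h1 : φ (Xe t i j h) = 1) :
    φ (Xe (-t) i j h) = 1 := by
  rw [← Xe_inv, _root_.map_inv, h1, inv_one]

lemma stepA (q : R) (i j k : Fin 4) (hij : i ≠ j) (hjk : j ≠ k) (hik : i ≠ k)
    (h : φ (Xe q i j hij) = 1) : Pk φ q i k hik := by
  intro c
  have e := Xe_comm q c i j k hij hjk hik
  calc φ (Xe (q * c) i k hik) = φ (Xe q i j hij * Xe c j k hjk * Xe (-q) i j hij *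
        Xe (-c) j k hjk) := (congrArg φ e).symm
    _ = 1 := by
        rw [_root_.map_mul, _root_.map_mul, _root_.map_mul, h, phi_Xe_neg φ h, one_mul, mul_one, ← _root_.map_mul,
          Xe_mul, add_neg_cancel, Xe_zero, _root_.map_one]

lemma stepB (q : R) (i j k : Fin 4) (hij : i ≠ j) (hki : k ≠ i) (hkj : k ≠ j)
    (h : φ (Xe q i j hij) = 1) : Pk φ q k j hkj := by
  intro c
  have e := Xe_comm c q k i j hki hij hkj
  have : φ (Xe (c * q) k j hkj) = 1 := by
    calc φ (Xe (c * q) k j hkj) = φ (Xe c k i hki * Xe q i j hij * Xe (-c) k i hki *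
          Xe (-q) i j hij) := (congrArg φ e).symm
      _ = 1 := by
          rw [_root_.map_mul, _root_.map_mul, _root_.map_mul, h, phi_Xe_neg φ h, mul_one, mul_one, ← _root_.map_mul,
            Xe_mul, add_neg_cancel, Xe_zero, _root_.map_one]
  rwa [mul_comm c q] at this

lemma Qof {q : R} {a b : Fin 4} {hab : a ≠ b} (h : Pk φ q a b hab) :
    φ (Xe q a b hab) = 1 := by
  have := h 1
  rwa [mul_one] at this

lemma allP (q : R) (i j : Fin 4) (hij : i ≠ j) (hQ : φ (Xe q i j hij) = 1)
    (a b : Fin 4) (hab : a ≠ b) : Pk φ q a b hab := by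
  obtain ⟨k, l, hik, hil, hjk, hjl, hkl, hcov⟩ :=
    (by decide : ∀ i j : Fin 4, i ≠ j → ∃ k l : Fin 4, i ≠ k ∧ i ≠ l ∧ j ≠ k ∧ j ≠ l ∧ k ≠ l ∧
      ∀ x : Fin 4, x = i ∨ x = j ∨ x = k ∨ x = l) i j hij
  have Pik := stepA φ q i j k hij hjk hik hQ
  have Pil := stepA φ q i j l hij hjl hil hQ
  have Pkj := stepB φ q i j k hij hik.symm hjk.symm hQ
  have Plj := stepB φ q i j l hij hil.symm hjl.symm hQ
  have Pij := stepA φ q i k j hik hjk.symm hij (Qof φ Pik)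
  have Pjk := stepB φ q i k j hik hij.symm hjk (Qof φ Pik)
  have Plk := stepB φ q i k l hik hil.symm hkl.symm (Qof φ Pik)
  have Pjl := stepB φ q i l j hil hij.symm hjl (Qof φ Pil)
  have Pkl := stepB φ q i l k hil hik.symm hkl (Qof φ Pil)
  have Pji := stepA φ q j k i hjk hik.symm hij.symm (Qof φ Pjk)
  have Pki := stepA φ q k j i hjk.symm hij.symm hik.symm (Qof φ Pkj)
  have Pli := stepA φ q l j i hjl.symm hij.symm hil.symm (Qof φ Plj)
  rcases hcov a with rfl | rfl | rfl | rfl <;> rcases hcov b with rfl | rfl | rfl | rfl <;>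
    first
      | exact absurd rfl hab
      | assumption

lemma phiW (q : R) (u : Rˣ) (a b : Fin 4) (hab : a ≠ b) (c d : R)
    (hu : (u : R) = 1 + q * c) (hui : ((u⁻¹ : Rˣ) : R) = 1 + q * d)
    (hPab : Pk φ q a b hab) (hPba : Pk φ q b a hab.symm) :
    φ (Wg u a b hab) = 1 := by
  have h1 : φ (Xe (u : R) a b hab) = φ (Xe 1 a b hab) := by
    rw [hu, ← Xe_mul, _root_.map_mul, hPab c, mul_one]
  have h2 : φ (Xe (-(↑u⁻¹ : R)) b a hab.symm) = φ (Xe (-1) b a hab.symm) := by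
    rw [hui, show -(1 + q * d) = -1 + q * (-d) by ring, ← Xe_mul, _root_.map_mul, hPba (-d), mul_one]
  have key : Xe (1 : R) a b hab * Xe (-1) b a hab.symm * Xe 1 a b hab *
      Xe (-1) a b hab * Xe 1 b a hab.symm * Xe (-1) a b hab = 1 := by
    have e1 : Xe (-1 : R) a b hab = (Xe 1 a b hab)⁻¹ := by rw [Xe_inv]
    have e2 : Xe (1 : R) b a hab.symm = (Xe (-1) b a hab.symm)⁻¹ := by rw [Xe_inv, neg_neg]
    rw [e1, e2]
    group
  have hk := congrArg φ key
  rw [_root_.map_one] at hk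
  simp only [_root_.map_mul] at hk
  unfold Wg
  simp only [_root_.map_mul, h1, h2]
  exact hk

lemma mul_form (q : R) (hq2 : q * q = 0) (A B : Matrix (Fin 4) (Fin 4) R) :
    (1 + q • A) * (1 + q • B) = 1 + q • (A + B) := by
  have h : (q • A) * (q • B) = (q * q) • (A * B) := smul_mul_smul_comm q A q B
  rw [add_mul, one_mul, mul_add, mul_one, h, hq2, zero_smul, add_zero, smul_add]
  abel

lemma Xe_val_q (q c : R) (a b : Fin 4) (hab : a ≠ b) :
    (Xe (q * c) a b hab : Matrix (Fin 4) (Fin 4) R) = 1 + q • Matrix.single a b c := by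
  show Matrix.transvection a b (q * c) = _
  rw [Matrix.smul_single, smul_eq_mul]
  rfl

/-- unit 1 + q c when q² = 0 -/
def uq (q : R) (hq2 : q * q = 0) (c : R) : Rˣ :=
  ⟨1 + q * c, 1 - q * c, by linear_combination (-(c * c)) * hq2,
    by linear_combination (-(c * c)) * hq2⟩

lemma Wg_val_q (q : R) (hq2 : q * q = 0) (c : R) (a b : Fin 4) (hab : a ≠ b) :
    (Wg (uq q hq2 c) a b hab : Matrix (Fin 4) (Fin 4) R) =
      1 + q • (Matrix.single a a c + Matrix.single b b (-c)) := by
  rw [Wg_val]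
  have e1 : ((uq q hq2 c : Rˣ) : R) - 1 = q * c := by
    show (1 + q * c) - 1 = q * c; ring
  have e2 : (((uq q hq2 c)⁻¹ : Rˣ) : R) - 1 = q * (-c) := by
    show (1 - q * c) - 1 = q * (-c); ring
  rw [e1, e2, smul_add, Matrix.smul_single, Matrix.smul_single,
    smul_eq_mul, smul_eq_mul, add_assoc]

lemma det_one_add_E33 (s : R) :
    Matrix.det (1 + s • Matrix.single (3 : Fin 4) 3 1) = 1 + s := by
  have e : (1 + s • Matrix.single (3 : Fin 4) 3 1) =
      Matrix.diagonal (fun i => if i = 3 then 1 + s else 1) := by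
    ext i j
    fin_cases i <;> fin_cases j <;>
      simp [Matrix.add_apply, Matrix.smul_apply, Matrix.one_apply, Matrix.single,
        Matrix.diagonal_apply]
  rw [e, Matrix.det_diagonal, Fin.prod_univ_four]
  simp

lemma kill_r2 (q : R) (hq2 : q * q = 0)
    (hP : ∀ a b (hab : a ≠ b), Pk φ q a b hab)
    (g : Matrix.SpecialLinearGroup (Fin 4) R) (B : Matrix (Fin 4) (Fin 4) R)
    (hg : (g : Matrix (Fin 4) (Fin 4) R) = 1 + q • B) :
    φ g = 1 := by
  have h01 : (0 : Fin 4) ≠ 1 := by decide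
  have h02 : (0 : Fin 4) ≠ 2 := by decide
  have h03 : (0 : Fin 4) ≠ 3 := by decide
  have h10 : (1 : Fin 4) ≠ 0 := by decide
  have h12 : (1 : Fin 4) ≠ 2 := by decide
  have h13 : (1 : Fin 4) ≠ 3 := by decide
  have h20 : (2 : Fin 4) ≠ 0 := by decide
  have h21 : (2 : Fin 4) ≠ 1 := by decide
  have h23 : (2 : Fin 4) ≠ 3 := by decide
  have h30 : (3 : Fin 4) ≠ 0 := by decide
  have h31 : (3 : Fin 4) ≠ 1 := by decide
  have h32 : (3 : Fin 4) ≠ 2 := by decide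
  set C : Matrix.SpecialLinearGroup (Fin 4) R :=
    Xe (q * (-(B 0 1))) 0 1 h01 * Xe (q * (-(B 0 2))) 0 2 h02 * Xe (q * (-(B 0 3))) 0 3 h03 *
    Xe (q * (-(B 1 0))) 1 0 h10 * Xe (q * (-(B 1 2))) 1 2 h12 * Xe (q * (-(B 1 3))) 1 3 h13 *
    Xe (q * (-(B 2 0))) 2 0 h20 * Xe (q * (-(B 2 1))) 2 1 h21 * Xe (q * (-(B 2 3))) 2 3 h23 *
    Xe (q * (-(B 3 0))) 3 0 h30 * Xe (q * (-(B 3 1))) 3 1 h31 * Xe (q * (-(B 3 2))) 3 2 h32 *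
    Wg (uq q hq2 (-(B 0 0))) 0 1 h01 * Wg (uq q hq2 (-(B 0 0 + B 1 1))) 1 2 h12 *
    Wg (uq q hq2 (-(B 0 0 + B 1 1 + B 2 2))) 2 3 h23 with hCdef
  have hφC : φ C = 1 := by
    rw [hCdef]
    simp only [_root_.map_mul]
    rw [hP 0 1 h01 (-(B 0 1)), hP 0 2 h02 (-(B 0 2)), hP 0 3 h03 (-(B 0 3)),
      hP 1 0 h10 (-(B 1 0)), hP 1 2 h12 (-(B 1 2)), hP 1 3 h13 (-(B 1 3)),
      hP 2 0 h20 (-(B 2 0)), hP 2 1 h21 (-(B 2 1)), hP 2 3 h23 (-(B 2 3)),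
      hP 3 0 h30 (-(B 3 0)), hP 3 1 h31 (-(B 3 1)), hP 3 2 h32 (-(B 3 2)),
      phiW φ q _ 0 1 h01 (-(B 0 0)) (B 0 0) rfl (by show (1 : R) - q * _ = _; ring)
        (hP 0 1 h01) (hP 1 0 h10),
      phiW φ q _ 1 2 h12 (-(B 0 0 + B 1 1)) (B 0 0 + B 1 1) rfl
        (by show (1 : R) - q * _ = _; ring) (hP 1 2 h12) (hP 2 1 h21),
      phiW φ q _ 2 3 h23 (-(B 0 0 + B 1 1 + B 2 2)) (B 0 0 + B 1 1 + B 2 2) rfl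
        (by show (1 : R) - q * _ = _; ring) (hP 2 3 h23) (hP 3 2 h32)]
    simp
  set t : R := B 0 0 + B 1 1 + B 2 2 + B 3 3 with ht
  have hgC : ((g * C : Matrix.SpecialLinearGroup (Fin 4) R) : Matrix (Fin 4) (Fin 4) R) =
      1 + q • (t • Matrix.single (3 : Fin 4) 3 1) := by
    rw [hCdef]
    simp only [Matrix.SpecialLinearGroup.coe_mul, hg, Xe_val_q, Wg_val_q, mul_form q hq2]
    congr 1
    apply congrArg
    ext i j
    fin_cases i <;> fin_cases j <;>
      simp [Matrix.add_apply, Matrix.smul_apply, Matrix.single, Matrix.of_apply, ht] <;>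
      ring1
  have hdet := (g * C).2
  rw [hgC, smul_smul] at hdet
  rw [det_one_add_E33] at hdet
  have hqt : q * t = 0 := by linear_combination hdet
  have hone : g * C = 1 := by
    apply Subtype.ext
    rw [hgC, smul_smul, hqt, zero_smul, add_zero, Matrix.SpecialLinearGroup.coe_one]
  have := congrArg φ hone
  rw [_root_.map_mul, _root_.map_one, hφC, mul_one] at this
  exact this

end Aux

section Field

variable {K : Type*} [Field K] {G : Type*} [Group G]
  (φ : Matrix.SpecialLinearGroup (Fin 4) K →* G)

lemma kill_r1 (hP : ∀ (a b : Fin 4) (hab : a ≠ b) (c : K), φ (Xe c a b hab) = 1)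
    (g : Matrix.SpecialLinearGroup (Fin 4) K) : φ g = 1 := by
  obtain ⟨L, L', D, hdecomp⟩ :=
    Matrix.Pivot.exists_list_transvec_mul_diagonal_mul_list_transvec
      (g : Matrix (Fin 4) (Fin 4) K)
  have lift : ∀ (L : List (Matrix.TransvectionStruct (Fin 4) K)),
      ∃ s : Matrix.SpecialLinearGroup (Fin 4) K,
        (s : Matrix (Fin 4) (Fin 4) K) = (L.map Matrix.TransvectionStruct.toMatrix).prod ∧
        φ s = 1 := by
    intro L
    induction L with
    | nil => exact ⟨1, by simp, map_one φ⟩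
    | cons tt L ih =>
        obtain ⟨s, hs, hφs⟩ := ih
        refine ⟨Xe tt.c tt.i tt.j tt.hij * s, ?_, ?_⟩
        · rw [Matrix.SpecialLinearGroup.coe_mul, hs]
          simp only [List.map_cons, List.prod_cons]
          rfl
        · rw [_root_.map_mul, hP _ _ _ _, hφs, mul_one]
  obtain ⟨s1, hs1, hφ1⟩ := lift L
  obtain ⟨s2, hs2, hφ2⟩ := lift L'
  have hdetD : (Matrix.diagonal D).det = 1 := by
    have hdg := g.2
    rw [hdecomp] at hdg
    simpa [Matrix.det_mul] using hdg
  have hprod : D 0 * D 1 * D 2 * D 3 = 1 := by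
    have := hdetD
    rw [Matrix.det_diagonal, Fin.prod_univ_four] at this
    linear_combination this
  have h0 : D 0 ≠ 0 := by intro h; rw [h] at hprod; simp at hprod
  have h1 : D 1 ≠ 0 := by intro h; rw [h] at hprod; simp at hprod
  have h2 : D 2 ≠ 0 := by intro h; rw [h] at hprod; simp at hprod
  have h01 : (0 : Fin 4) ≠ 1 := by decide
  have h10 : (1 : Fin 4) ≠ 0 := by decide
  have h12 : (1 : Fin 4) ≠ 2 := by decide
  have h21 : (2 : Fin 4) ≠ 1 := by decide
  have h23 : (2 : Fin 4) ≠ 3 := by decide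
  have h32 : (3 : Fin 4) ≠ 2 := by decide
  set u1 : Kˣ := ⟨D 0, (D 0)⁻¹, mul_inv_cancel₀ h0, inv_mul_cancel₀ h0⟩ with hu1def
  set u2 : Kˣ := ⟨D 0 * D 1, (D 0 * D 1)⁻¹, mul_inv_cancel₀ (mul_ne_zero h0 h1),
    inv_mul_cancel₀ (mul_ne_zero h0 h1)⟩ with hu2def
  set u3 : Kˣ := ⟨D 0 * D 1 * D 2, (D 0 * D 1 * D 2)⁻¹,
    mul_inv_cancel₀ (mul_ne_zero (mul_ne_zero h0 h1) h2),
    inv_mul_cancel₀ (mul_ne_zero (mul_ne_zero h0 h1) h2)⟩ with hu3def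
  set s3 : Matrix.SpecialLinearGroup (Fin 4) K :=
    Wg u1 0 1 h01 * Wg u2 1 2 h12 * Wg u3 2 3 h23 with hs3def
  have hv1 : (u1 : K) = D 0 := rfl
  have hv1i : ((u1⁻¹ : Kˣ) : K) = (D 0)⁻¹ := rfl
  have hv2 : (u2 : K) = D 0 * D 1 := rfl
  have hv2i : ((u2⁻¹ : Kˣ) : K) = (D 0 * D 1)⁻¹ := rfl
  have hv3 : (u3 : K) = D 0 * D 1 * D 2 := rfl
  have hv3i : ((u3⁻¹ : Kˣ) : K) = (D 0 * D 1 * D 2)⁻¹ := rfl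
  have hD3 : (D 0 * D 1 * D 2)⁻¹ = D 3 := by
    field_simp
    linear_combination -hprod
  have hs3 : (s3 : Matrix (Fin 4) (Fin 4) K) = Matrix.diagonal D := by
    rw [hs3def]
    simp only [Matrix.SpecialLinearGroup.coe_mul, Wg_val, hv1, hv1i, hv2, hv2i, hv3, hv3i]
    ext i j
    fin_cases i <;> fin_cases j <;>
      simp [Matrix.mul_apply, Fin.sum_univ_four, Matrix.add_apply, Matrix.one_apply,
        Matrix.single, Matrix.diagonal_apply, hD3] <;>
      (try field_simp) <;> (try ring1)
  have hP1 : ∀ (a b : Fin 4) (hab : a ≠ b), Pk φ (1 : K) a b hab :=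
    fun a b hab c => hP a b hab (1 * c)
  have hφ3 : φ s3 = 1 := by
    rw [hs3def, _root_.map_mul, _root_.map_mul,
      phiW φ 1 u1 0 1 h01 (D 0 - 1) ((D 0)⁻¹ - 1)
        (by rw [hv1]; ring) (by rw [hv1i]; ring) (hP1 0 1 h01) (hP1 1 0 h10),
      phiW φ 1 u2 1 2 h12 (D 0 * D 1 - 1) ((D 0 * D 1)⁻¹ - 1)
        (by rw [hv2]; ring) (by rw [hv2i]; ring) (hP1 1 2 h12) (hP1 2 1 h21),
      phiW φ 1 u3 2 3 h23 (D 0 * D 1 * D 2 - 1) ((D 0 * D 1 * D 2)⁻¹ - 1)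
        (by rw [hv3]; ring) (by rw [hv3i]; ring) (hP1 2 3 h23) (hP1 3 2 h32),
      mul_one, mul_one]
  have hg : g = s1 * s3 * s2 := by
    apply Subtype.ext
    rw [Matrix.SpecialLinearGroup.coe_mul, Matrix.SpecialLinearGroup.coe_mul, hs1, hs2, hs3]
    exact hdecomp
  rw [hg, _root_.map_mul, _root_.map_mul, hφ1, hφ2, hφ3, one_mul, mul_one]

end Field

theorem stmt9 (p : ℕ) (hp : p.Prime) (r : ℕ) (hr : 1 ≤ r)
    {V : Type*} [AddCommGroup V] [Module ℂ V] [FiniteDimensional ℂ V] [Nontrivial V]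
    (φ : Matrix.SpecialLinearGroup (Fin 4) (ZMod (p ^ r)) →*
      LinearMap.GeneralLinearGroup ℂ V)
    (hirr : ∀ W : Submodule ℂ V,
      (∀ g, ∀ w ∈ W, (φ g : V →ₗ[ℂ] V) w ∈ W) → W = ⊥ ∨ W = ⊤)
    (hnew : ¬ (Matrix.SpecialLinearGroup.map (n := Fin 4)
        (ZMod.castHom (pow_dvd_pow p (by omega : r - 1 ≤ r))
          (ZMod (p ^ (r - 1))))).ker ≤ φ.ker) :
    ∀ (i j : Fin 4) (h : i ≠ j), φ (elem p r i j h) ≠ 1 := by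
  intro i j h hcon
  apply hnew
  intro g hgk
  rw [MonoidHom.mem_ker]
  have hel : elem p r i j h = Xe ((p : ZMod (p ^ r)) ^ (r - 1)) i j h := Subtype.ext rfl
  rw [hel] at hcon
  have hP : ∀ (a b : Fin 4) (hab : a ≠ b),
      Pk φ ((p : ZMod (p ^ r)) ^ (r - 1)) a b hab := allP φ _ i j h hcon
  haveI : NeZero (p ^ r) := ⟨(pow_pos hp.pos r).ne'⟩
  rcases eq_or_lt_of_le hr with hr1 | hr2
  · -- r = 1
    have hrr : r = 1 := hr1.symm
    subst hrr
    have hP1 : ∀ (a b : Fin 4) (hab : a ≠ b) (c : ZMod (p ^ 1)), φ (Xe c a b hab) = 1 := by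
      intro a b hab c
      have e : ((p : ZMod (p ^ 1)) ^ (1 - 1)) = 1 := by norm_num
      have h2 := hP a b hab c
      rwa [e, one_mul] at h2
    haveI : Fact (Nat.Prime (p ^ 1)) := ⟨by simpa using hp⟩
    exact kill_r1 φ hP1 g
  · -- r ≥ 2
    have hr2' : 2 ≤ r := hr2
    have hpr : (p : ZMod (p ^ r)) ^ r = 0 := by
      rw [← Nat.cast_pow, ZMod.natCast_self]
    have hq2 : ((p : ZMod (p ^ r)) ^ (r - 1)) * ((p : ZMod (p ^ r)) ^ (r - 1)) = 0 := by
      rw [← pow_add, show r - 1 + (r - 1) = r + (r - 2) by omega, pow_add, hpr, zero_mul]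
    haveI : NeZero (p ^ (r - 1)) := ⟨(pow_pos hp.pos _).ne'⟩
    rw [MonoidHom.mem_ker] at hgk
    have hmat : ∀ a b : Fin 4, (ZMod.castHom (pow_dvd_pow p (by omega : r - 1 ≤ r))
        (ZMod (p ^ (r - 1)))) ((g : Matrix (Fin 4) (Fin 4) (ZMod (p ^ r))) a b) =
        (1 : Matrix (Fin 4) (Fin 4) (ZMod (p ^ (r - 1)))) a b := by
      have hv := congrArg Subtype.val hgk
      have hv' : Matrix.map (g : Matrix (Fin 4) (Fin 4) (ZMod (p ^ r)))
          (ZMod.castHom (pow_dvd_pow p (by omega : r - 1 ≤ r)) (ZMod (p ^ (r - 1)))) =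
          (1 : Matrix (Fin 4) (Fin 4) (ZMod (p ^ (r - 1)))) := hv
      intro a b
      have h2 := congrFun (congrFun hv' a) b
      rwa [Matrix.map_apply] at h2
    have hB : ∀ a b : Fin 4, ∃ c, (g : Matrix (Fin 4) (Fin 4) (ZMod (p ^ r))) a b =
        (1 : Matrix (Fin 4) (Fin 4) (ZMod (p ^ r))) a b + ((p : ZMod (p ^ r)) ^ (r - 1)) * c := by
      intro a b
      have hone : (ZMod.castHom (pow_dvd_pow p (by omega : r - 1 ≤ r)) (ZMod (p ^ (r - 1))))
          ((1 : Matrix (Fin 4) (Fin 4) (ZMod (p ^ r))) a b) =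
          (1 : Matrix (Fin 4) (Fin 4) (ZMod (p ^ (r - 1)))) a b := by
        by_cases hab : a = b
        · subst hab; rw [Matrix.one_apply_eq, Matrix.one_apply_eq, _root_.map_one]
        · rw [Matrix.one_apply_ne hab, Matrix.one_apply_ne hab, _root_.map_zero]
      have hy : (ZMod.castHom (pow_dvd_pow p (by omega : r - 1 ≤ r)) (ZMod (p ^ (r - 1))))
          ((g : Matrix (Fin 4) (Fin 4) (ZMod (p ^ r))) a b -
            (1 : Matrix (Fin 4) (Fin 4) (ZMod (p ^ r))) a b) = 0 := by
        rw [_root_.map_sub, hmat a b, hone, sub_self]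
      set x : ZMod (p ^ r) := (g : Matrix (Fin 4) (Fin 4) (ZMod (p ^ r))) a b -
        (1 : Matrix (Fin 4) (Fin 4) (ZMod (p ^ r))) a b with hx
      have h1 : ((x.val : ℕ) : ZMod (p ^ (r - 1))) = 0 := by
        rw [ZMod.natCast_val]
        exact (ZMod.castHom_apply x).symm.trans hy
      rw [ZMod.natCast_eq_zero_iff] at h1
      obtain ⟨m, hm⟩ := h1
      refine ⟨(m : ZMod (p ^ r)), ?_⟩
      have h2 : ((x.val : ℕ) : ZMod (p ^ r)) = x := ZMod.natCast_rightInverse x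
      have h3 : x = ((p : ZMod (p ^ r)) ^ (r - 1)) * (m : ZMod (p ^ r)) := by
        rw [← h2, hm, Nat.cast_mul, Nat.cast_pow]
      rw [hx] at h3
      linear_combination h3
    choose Bf hBf using hB
    have hgmat : (g : Matrix (Fin 4) (Fin 4) (ZMod (p ^ r))) =
        1 + ((p : ZMod (p ^ r)) ^ (r - 1)) • Matrix.of Bf := by
      ext a b
      rw [Matrix.add_apply, Matrix.smul_apply, Matrix.of_apply, smul_eq_mul]
      exact hBf a b
    exact kill_r2 φ _ hq2 hP g (Matrix.of Bf) hgmat
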